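/- arXiv:2011.10036 — 3 statements merged into one kernel-verified Lean document; each statement's English description precedes it below -/
import Mathlib

section
/- Let s : ℝ → ℝ and v : ℝ → ℝ^d be differentiable functions, let m > 0 be a constant, and suppose they satisfy the coupled ODE (1 + exp(s(t))/m) · s'(t) = v(t)ᵀ v'(t) for all t. Then for all t₀ ≤ t₁, [s(t) + exp(s(t))/m] evaluated from t₀ to t₁ equals [½‖v(t)‖₂²] evaluated from t₀ to t₁; i.e., s(t) + exp(s(t))/m − ½‖v(t)‖₂² is constant in t. -/
open Real

theorem sen_conservation (d : ℕ) (m : ℝ) (hm : 0 < m)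
    (s : ℝ → ℝ) (v : ℝ → EuclideanSpace ℝ (Fin d))
    (hs : Differentiable ℝ s) (hv : Differentiable ℝ v)
    (hode : ∀ t, (1 + Real.exp (s t) / m) * deriv s t
      = (inner ℝ (v t) (deriv v t) : ℝ)) :
    ∀ t₀ t₁ : ℝ, t₀ ≤ t₁ →
      (s t₁ + Real.exp (s t₁) / m) - (s t₀ + Real.exp (s t₀) / m)
        = (1 / 2) * ‖v t₁‖ ^ 2 - (1 / 2) * ‖v t₀‖ ^ 2 := by
  set F : ℝ → ℝ := fun t => s t + Real.exp (s t) / m - (1/2) * ‖v t‖ ^ 2 with hF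
  have hderiv : ∀ t, HasDerivAt F 0 t := by
    intro t
    have hst : HasDerivAt s (deriv s t) t := (hs t).hasDerivAt
    have hvt : HasDerivAt v (deriv v t) t := (hv t).hasDerivAt
    have h1 : HasDerivAt (fun t => s t + Real.exp (s t) / m)
        ((1 + Real.exp (s t) / m) * deriv s t) t := by
      have := hst.add ((hst.exp).div_const m)
      refine this.congr_deriv ?_
      ring
    have h2 : HasDerivAt (fun t => (1/2) * ‖v t‖ ^ 2)
        ((inner ℝ (v t) (deriv v t) : ℝ)) t := by
      have hi : HasDerivAt (fun t => (inner ℝ (v t) (v t) : ℝ))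
          ((inner ℝ (v t) (deriv v t) : ℝ) + (inner ℝ (deriv v t) (v t) : ℝ)) t :=
        hvt.inner ℝ hvt
      have hnorm : (fun t => (1/2) * ‖v t‖ ^ 2)
          = fun t => (1/2) * (inner ℝ (v t) (v t) : ℝ) := by
        funext t; rw [real_inner_self_eq_norm_sq]
      rw [hnorm]
      have := hi.const_mul (1/2 : ℝ)
      refine this.congr_deriv ?_
      rw [real_inner_comm (deriv v t) (v t)]
      ring
    have := h1.sub h2
    rw [hode t, sub_self] at this
    exact this
  intro t₀ t₁ _
  have hconst : F t₁ = F t₀ := by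
    have : F = fun _ => F 0 := by
      funext x
      exact is_const_of_deriv_eq_zero (fun t => (hderiv t).differentiableAt)
        (fun t => (hderiv t).deriv) x 0
    rw [this]
  have := hconst
  simp only [hF] at this
  linarith
end

section
/- Let s : ℝ → ℝ and v : ℝ → ℝ^d be differentiable with (1 + exp(s(t))/m)·s'(t) = v(t)ᵀ v'(t) for all t, and suppose s(0) = 0 and v(0) = 0. Then for all t, ‖v(t)‖₂² = 2·(s(t) + exp(s(t))/m − 1/m). -/
open Real

theorem sen_relationship (d : ℕ) (m : ℝ) (hm : 0 < m)
    (s : ℝ → ℝ) (v : ℝ → EuclideanSpace ℝ (Fin d))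
    (hs : Differentiable ℝ s) (hv : Differentiable ℝ v)
    (hode : ∀ t, (1 + Real.exp (s t) / m) * deriv s t
      = (inner ℝ (v t) (deriv v t) : ℝ))
    (hs0 : s 0 = 0) (hv0 : v 0 = 0) :
    ∀ t : ℝ, ‖v t‖ ^ 2 = 2 * (s t + Real.exp (s t) / m - 1 / m) := by
  set F : ℝ → ℝ := fun t =>
    (inner ℝ (v t) (v t) : ℝ) - 2 * (s t + Real.exp (s t) / m - 1 / m) with hF
  have hder : ∀ t, HasDerivAt F 0 t := by
    intro t
    have hvd := (hv t).hasDerivAt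
    have hsd := (hs t).hasDerivAt
    have h1 : HasDerivAt (fun t => (inner ℝ (v t) (v t) : ℝ))
        (2 * (inner ℝ (v t) (deriv v t) : ℝ)) t := by
      have := hvd.inner ℝ hvd
      refine this.congr_deriv ?_
      rw [real_inner_comm]
      ring
    have h2 : HasDerivAt (fun t => 2 * (s t + Real.exp (s t) / m - 1 / m))
        (2 * ((1 + Real.exp (s t) / m) * deriv s t)) t := by
      have hexp : HasDerivAt (fun t => Real.exp (s t)) (Real.exp (s t) * deriv s t) t :=
        (Real.hasDerivAt_exp (s t)).comp t hsd
      have : HasDerivAt (fun t => s t + Real.exp (s t) / m - 1 / m)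
          (deriv s t + Real.exp (s t) * deriv s t / m - 0) t :=
        (hsd.add (hexp.div_const m)).sub (hasDerivAt_const t (1 / m))
      have := this.const_mul 2
      refine this.congr_deriv ?_
      ring
    have h3 := h1.sub h2
    have heq : 2 * (inner ℝ (v t) (deriv v t) : ℝ)
        - 2 * ((1 + Real.exp (s t) / m) * deriv s t) = 0 := by
      rw [hode t]; ring
    rw [heq] at h3
    exact h3
  have hconst : ∀ t, F t = F 0 := by
    intro t
    exact is_const_of_deriv_eq_zero (fun x => (hder x).differentiableAt)
      (fun x => (hder x).deriv) t 0
  intro t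
  have h0 : F 0 = 0 := by
    simp [hF, hs0, hv0]
  have := hconst t
  rw [h0, hF] at this
  have hni : (inner ℝ (v t) (v t) : ℝ) = ‖v t‖ ^ 2 := by
    rw [real_inner_self_eq_norm_sq]
  simp only at this
  linarith [this, hni]
end

section
/- Let s : ℝ → ℝ and v : ℝ → ℝ^d satisfy the coupled ODE (1 + exp(s(t))/m)·s'(t) = v(t)ᵀ v'(t) with s(0)=0 and v(0)=0, where m > 0. If ‖v(t)‖₂ → ∞ as t → ∞, then s(t) → ∞ as t → ∞. -/
open Filter

theorem score_diverges_of_embedding_diverges (d : ℕ) (m : ℝ) (hm : 0 < m)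
    (s : ℝ → ℝ) (v : ℝ → EuclideanSpace ℝ (Fin d))
    (hs : Differentiable ℝ s) (hv : Differentiable ℝ v)
    (hode : ∀ t, (1 + Real.exp (s t) / m) * deriv s t
      = (inner ℝ (v t) (deriv v t) : ℝ))
    (hs0 : s 0 = 0) (hv0 : v 0 = 0)
    (hdiv : Tendsto (fun t => ‖v t‖) atTop atTop) :
    Tendsto s atTop atTop := by
  set h : ℝ → ℝ := fun t => (inner ℝ (v t) (v t) : ℝ) - 2 * s t - 2 * Real.exp (s t) / m with hh
  have hder : ∀ t, HasDerivAt h 0 t := by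
    intro t
    have hvd : HasDerivAt v (deriv v t) t := (hv t).hasDerivAt
    have hsd : HasDerivAt s (deriv s t) t := (hs t).hasDerivAt
    have h1 : HasDerivAt (fun t => (inner ℝ (v t) (v t) : ℝ))
        ((inner ℝ (v t) (deriv v t) : ℝ) + (inner ℝ (deriv v t) (v t) : ℝ)) t :=
      hvd.inner ℝ hvd
    have h2 : HasDerivAt (fun t => Real.exp (s t)) (Real.exp (s t) * deriv s t) t :=
      (Real.hasDerivAt_exp (s t)).comp t hsd
    have h3 := (h1.sub (hsd.const_mul 2)).sub ((h2.const_mul 2).div_const m)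
    refine h3.congr_deriv ?_
    have hsym : (inner ℝ (deriv v t) (v t) : ℝ) = (inner ℝ (v t) (deriv v t) : ℝ) :=
      real_inner_comm _ _
    rw [hsym, ← hode t]
    ring
  have hconst : ∀ t, h t = h 0 :=
    fun t => is_const_of_deriv_eq_zero (fun x => (hder x).differentiableAt)
      (fun x => (hder x).deriv) t 0
  have key : ∀ t, ‖v t‖ ^ 2 = 2 * s t + 2 * Real.exp (s t) / m - 2 / m := by
    intro t
    have := hconst t
    simp only [hh, hv0, hs0, inner_zero_left, Real.exp_zero] at this
    have hn : (inner ℝ (v t) (v t) : ℝ) = ‖v t‖ ^ 2 := real_inner_self_eq_norm_sq _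
    rw [hn] at this
    linarith
  rw [tendsto_atTop]
  intro b
  have hsq : Tendsto (fun t => ‖v t‖ ^ 2) atTop atTop := by
    simpa [pow_two] using hdiv.atTop_mul_atTop₀ hdiv
  have hev : ∀ᶠ t in atTop, 2 * b + 2 * Real.exp b / m - 2 / m + 1 ≤ ‖v t‖ ^ 2 :=
    hsq.eventually_ge_atTop _
  filter_upwards [hev] with t ht
  have hk := key t
  by_contra hlt
  push_neg at hlt
  have hexp : Real.exp (s t) < Real.exp b := Real.exp_lt_exp.2 hlt
  have hdiv2 : 2 * Real.exp (s t) / m < 2 * Real.exp b / m := by gcongr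
  linarith
end
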